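/- Under hypothesis (H2): Y topological vector space, A closed proper subset with A - (0,∞)·k ⊆ int A for some k ≠ 0, one has A = cl(int A), core A = int A, and {y : φ_{A,k}(y) = t} = tk + bd A for all t ∈ ℝ; moreover if φ_{A,k} is proper, then φ_{A,k} is strictly quasiconvex if and only if A is a strictly convex set (λa¹ + (1-λ)a² ∈ int A for distinct a¹, a² ∈ A and λ ∈ (0,1)). -/

import Mathlib

open Set Pointwise

noncomputable def phiF {Y : Type*} [AddCommGroup Y] [Module ℝ Y] (A : Set Y) (k : Y) (y : Y) : EReal :=
  sInf ((fun t : ℝ => (t : EReal)) '' {t : ℝ | y - t • k ∈ A})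

def recCone {Y : Type*} [AddCommGroup Y] [Module ℝ Y] (A : Set Y) : Set Y :=
  {u | ∀ a ∈ A, ∀ t : ℝ, 0 ≤ t → a + t • u ∈ A}

def algInterior {Y : Type*} [AddCommGroup Y] [Module ℝ Y] (C : Set Y) : Set Y :=
  {x ∈ C | ∀ y : Y, ∃ ε : ℝ, 0 < ε ∧ ∀ t : ℝ, 0 ≤ t → t ≤ ε → x + t • y ∈ C}

section Aux

variable {Y : Type*} [AddCommGroup Y] [Module ℝ Y] [TopologicalSpace Y]
    [IsTopologicalAddGroup Y] [ContinuousSMul ℝ Y] {A : Set Y} {k : Y}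

lemma aux_arith (y k : Y) (s t : ℝ) : (y - s • k) - (t - s) • k = y - t • k := by
  rw [sub_smul]; abel

lemma aux_cont (y k : Y) : Continuous fun t : ℝ => y - t • k := by continuity

lemma aux_up (hint : ∀ a ∈ A, ∀ t : ℝ, 0 < t → a - t • k ∈ interior A)
    {y : Y} {s t : ℝ} (hs : y - s • k ∈ A) (hst : s < t) : y - t • k ∈ interior A := by
  have := hint _ hs (t - s) (by linarith)
  rwa [aux_arith] at this

lemma aux_open {y : Y} {s : ℝ} (h : y - s • k ∈ interior A) :
    ∃ s' < s, y - s' • k ∈ interior A := by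
  have hop : IsOpen ((fun t : ℝ => y - t • k) ⁻¹' interior A) :=
    isOpen_interior.preimage (aux_cont y k)
  rcases Metric.isOpen_iff.1 hop s h with ⟨δ, hδ, hball⟩
  refine ⟨s - δ / 2, by linarith, hball ?_⟩
  simp only [Metric.mem_ball, Real.dist_eq]
  rw [show s - δ / 2 - s = -(δ / 2) by ring, abs_neg, abs_of_pos (by linarith)]
  linarith

lemma aux_le {y : Y} {t : ℝ} (h : y - t • k ∈ A) : phiF A k y ≤ (t : EReal) :=
  sInf_le ⟨t, h, rfl⟩

lemma aux_lt {y : Y} {c : ℝ} (h : phiF A k y < (c : EReal)) :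
    ∃ s : ℝ, s < c ∧ y - s • k ∈ A := by
  rcases sInf_lt_iff.1 h with ⟨x, hx, hxc⟩
  rcases hx with ⟨s, hs, rfl⟩
  exact ⟨s, EReal.coe_lt_coe_iff.mp hxc, hs⟩

lemma phi_eq_iff (hAc : IsClosed A)
    (hint : ∀ a ∈ A, ∀ t : ℝ, 0 < t → a - t • k ∈ interior A) {y : Y} {t : ℝ} :
    phiF A k y = (t : EReal) ↔ y - t • k ∈ A ∧ y - t • k ∉ interior A := by
  constructor
  · intro h
    have hIoi : Ioi t ⊆ {s : ℝ | y - s • k ∈ A} := by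
      intro u hu
      have hlt : phiF A k y < (u : EReal) := by
        rw [h]; exact_mod_cast hu
      rcases aux_lt hlt with ⟨s, hsu, hsA⟩
      show y - u • k ∈ A
      exact interior_subset (aux_up hint hsA hsu)
    have hclS : IsClosed {s : ℝ | y - s • k ∈ A} := hAc.preimage (aux_cont y k)
    have hmem : y - t • k ∈ A := by
      have h1 := closure_mono hIoi
      rw [closure_Ioi, hclS.closure_eq] at h1
      exact h1 (le_refl t)
    refine ⟨hmem, fun hin => ?_⟩
    rcases aux_open hin with ⟨s', hs', hs'A⟩
    have := aux_le (k := k) (interior_subset hs'A)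
    rw [h] at this
    exact absurd (by exact_mod_cast this) (not_le.2 hs')
  · rintro ⟨hA, hni⟩
    refine le_antisymm (aux_le hA) (not_lt.1 fun hlt => ?_)
    rcases aux_lt hlt with ⟨s, hst, hsA⟩
    exact hni (aux_up hint hsA hst)

end Aux

theorem stmt_16 {Y : Type*} [AddCommGroup Y] [Module ℝ Y] [TopologicalSpace Y]
    [IsTopologicalAddGroup Y] [ContinuousSMul ℝ Y]
    (A : Set Y) (hAc : IsClosed A) (hAne : A.Nonempty) (hAp : A ≠ Set.univ)
    (k : Y) (hk : k ≠ 0) (hint : ∀ a ∈ A, ∀ t : ℝ, 0 < t → a - t • k ∈ interior A) :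
    A = closure (interior A) ∧
    algInterior A = interior A ∧
    (∀ t : ℝ, {y | phiF A k y = (t : EReal)} = {y | y - t • k ∈ frontier A}) ∧
    (((∃ y : Y, phiF A k y ≠ ⊤) ∧ ∀ y : Y, phiF A k y ≠ ⊥) →
      ((Convex ℝ {y | ∃ t : ℝ, y - t • k ∈ A} ∧
          ∀ y₁ ∈ {y | ∃ t : ℝ, y - t • k ∈ A}, ∀ y₂ ∈ {y | ∃ t : ℝ, y - t • k ∈ A},
            y₁ ≠ y₂ → ∀ l : ℝ, 0 < l → l < 1 →
              phiF A k (l • y₁ + (1 - l) • y₂) < max (phiF A k y₁) (phiF A k y₂)) ↔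
        (∀ a₁ ∈ A, ∀ a₂ ∈ A, a₁ ≠ a₂ → ∀ l : ℝ, 0 < l → l < 1 →
          l • a₁ + (1 - l) • a₂ ∈ interior A))) := by
  -- upward closedness, restated with ≤
  have hup : ∀ {y : Y} {s t : ℝ}, y - s • k ∈ A → s ≤ t → y - t • k ∈ A := by
    intro y s t hs hst
    rcases eq_or_lt_of_le hst with rfl | hlt
    · exact hs
    · exact interior_subset (aux_up hint hs hlt)
  refine ⟨?_, ?_, ?_, ?_⟩
  · -- A = closure (interior A)
    apply Subset.antisymm
    · intro a ha
      rw [mem_closure_iff]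
      intro o ho hao
      have hop : IsOpen ((fun t : ℝ => a - t • k) ⁻¹' o) := ho.preimage (aux_cont a k)
      have h0 : (0 : ℝ) ∈ (fun t : ℝ => a - t • k) ⁻¹' o := by
        simp [hao]
      rcases Metric.isOpen_iff.1 hop 0 h0 with ⟨δ, hδ, hball⟩
      refine ⟨a - (δ / 2) • k, hball ?_, hint a ha (δ / 2) (by linarith)⟩
      simp only [Metric.mem_ball, Real.dist_eq, sub_zero]
      rw [abs_of_pos (by linarith)]
      linarith
    · exact (closure_mono interior_subset).trans hAc.closure_eq.subset
  · -- algInterior A = interior A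
    apply Subset.antisymm
    · rintro x ⟨hxA, hdir⟩
      rcases hdir k with ⟨ε, hε, hεmem⟩
      have hxa : x + ε • k ∈ A := hεmem ε hε.le le_rfl
      have := hint _ hxa ε hε
      rwa [add_sub_cancel_right] at this
    · intro x hx
      refine ⟨interior_subset hx, fun y => ?_⟩
      have hop : IsOpen ((fun t : ℝ => x + t • y) ⁻¹' interior A) :=
        isOpen_interior.preimage (by continuity)
      have h0 : (0 : ℝ) ∈ (fun t : ℝ => x + t • y) ⁻¹' interior A := by
        simp [hx]
      rcases Metric.isOpen_iff.1 hop 0 h0 with ⟨δ, hδ, hball⟩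
      refine ⟨δ / 2, by linarith, fun t ht0 htε => interior_subset (hball ?_)⟩
      simp only [Metric.mem_ball, Real.dist_eq, sub_zero]
      rw [abs_of_nonneg ht0]
      linarith
  · -- level sets
    intro t
    ext y
    simp only [mem_setOf_eq, phi_eq_iff hAc hint, hAc.frontier_eq, mem_diff]
  · -- strict quasiconvexity iff strict convexity
    rintro ⟨-, hbot⟩
    constructor
    · rintro ⟨-, hsq⟩ a₁ ha₁ a₂ ha₂ hne l hl0 hl1
      have hd₁ : a₁ ∈ {y | ∃ t : ℝ, y - t • k ∈ A} := ⟨0, by simpa using ha₁⟩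
      have hd₂ : a₂ ∈ {y | ∃ t : ℝ, y - t • k ∈ A} := ⟨0, by simpa using ha₂⟩
      have hlt := hsq a₁ hd₁ a₂ hd₂ hne l hl0 hl1
      have hle₁ : phiF A k a₁ ≤ ((0 : ℝ) : EReal) := aux_le (by simpa using ha₁)
      have hle₂ : phiF A k a₂ ≤ ((0 : ℝ) : EReal) := aux_le (by simpa using ha₂)
      have hlt0 : phiF A k (l • a₁ + (1 - l) • a₂) < ((0 : ℝ) : EReal) :=
        lt_of_lt_of_le hlt (max_le hle₁ hle₂)
      rcases aux_lt hlt0 with ⟨s, hs0, hsA⟩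
      have := hint _ hsA (-s) (by linarith)
      rwa [show l • a₁ + (1 - l) • a₂ - s • k - (-s) • k = l • a₁ + (1 - l) • a₂ by
        rw [neg_smul]; abel] at this
    · intro hsc
      constructor
      · -- convexity of the domain
        rintro y₁ ⟨t₁, ht₁⟩ y₂ ⟨t₂, ht₂⟩ a b ha hb hab
        refine ⟨a * t₁ + b * t₂, ?_⟩
        have harith : a • y₁ + b • y₂ - (a * t₁ + b * t₂) • k
            = a • (y₁ - t₁ • k) + b • (y₂ - t₂ • k) := by
          module
        rw [harith]
        rcases eq_or_lt_of_le ha with rfl | ha'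
        · have hb1 : b = 1 := by linarith
          subst hb1
          simpa using ht₂
        rcases eq_or_lt_of_le hb with rfl | hb'
        · have : a = 1 := by linarith
          subst this
          simpa using ht₁
        by_cases heq : y₁ - t₁ • k = y₂ - t₂ • k
        · rw [heq, ← add_smul, hab, one_smul]
          exact ht₂
        · have hb1 : b = 1 - a := by linarith
          have := hsc _ ht₁ _ ht₂ heq a ha' (by linarith)
          rw [hb1]
          exact interior_subset this
      · -- strict quasiconvexity
        intro y₁ hy₁ y₂ hy₂ hne l hl0 hl1
        have htop : ∀ y ∈ {y : Y | ∃ t : ℝ, y - t • k ∈ A}, phiF A k y ≠ ⊤ := by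
          rintro y ⟨t, ht⟩ hT
          have := aux_le (k := k) ht
          rw [hT] at this
          exact absurd this (by simp)
        set t₁ : ℝ := (phiF A k y₁).toReal with ht₁def
        set t₂ : ℝ := (phiF A k y₂).toReal with ht₂def
        have he₁ : phiF A k y₁ = (t₁ : EReal) := (EReal.coe_toReal (htop y₁ hy₁) (hbot y₁)).symm
        have he₂ : phiF A k y₂ = (t₂ : EReal) := (EReal.coe_toReal (htop y₂ hy₂) (hbot y₂)).symm
        have hm₁ : y₁ - t₁ • k ∈ A := ((phi_eq_iff hAc hint).1 he₁).1
        have hm₂ : y₂ - t₂ • k ∈ A := ((phi_eq_iff hAc hint).1 he₂).1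
        set m : ℝ := max t₁ t₂ with hmdef
        have ha₁ : y₁ - m • k ∈ A := hup hm₁ (le_max_left _ _)
        have ha₂ : y₂ - m • k ∈ A := hup hm₂ (le_max_right _ _)
        have hane : y₁ - m • k ≠ y₂ - m • k := by
          intro h
          exact hne (by have := sub_left_injective h; exact this)
        have hin := hsc _ ha₁ _ ha₂ hane l hl0 hl1
        have harith : l • (y₁ - m • k) + (1 - l) • (y₂ - m • k)
            = (l • y₁ + (1 - l) • y₂) - m • k := by
          simp only [smul_sub, smul_smul]
          module
        rw [harith] at hin
        rcases aux_open hin with ⟨s, hs, hsA⟩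
        have hφle : phiF A k (l • y₁ + (1 - l) • y₂) ≤ (s : EReal) :=
          aux_le (interior_subset hsA)
        have hφlt : phiF A k (l • y₁ + (1 - l) • y₂) < (m : EReal) :=
          lt_of_le_of_lt hφle (by exact_mod_cast hs)
        rw [he₁, he₂]
        have hcoe : ((m : ℝ) : EReal) = max ((t₁ : ℝ) : EReal) ((t₂ : ℝ) : EReal) := by
          rcases le_total t₁ t₂ with h | h
          · rw [max_eq_right (by exact_mod_cast h), hmdef, max_eq_right h]
          · rw [max_eq_left (by exact_mod_cast h), hmdef, max_eq_left h]
        rwa [hcoe] at hφlt
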